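/- Let n ≥ 3 be an odd integer and let m ≥ 2 be an integer such that m^{(n−1)/n} > 2^n/n (real power). Then every pair of integers x, y with y ≥ 1 satisfying x^n − m·y^n = 1 or x^n − m·y^n = −1 obeys |m^{1/n} − x/y| < 1/(2y²). -/

import Mathlib

/-- For an odd integer `n ≥ 3` and an integer `m ≥ 2` with
`m^{(n−1)/n} > 2^n/n`, every integer solution `x, y` with `y ≥ 1` of
`x^n − m·y^n = ±1` satisfies `|m^{1/n} − x/y| < 1/(2y²)`. -/
theorem stmt_6 (n : ℕ) (hn : 3 ≤ n) (hodd : Odd n) (m : ℤ) (hm : 2 ≤ m)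
    (hbig : (m : ℝ) ^ (((n : ℝ) - 1) / n) > 2 ^ n / (n : ℝ)) :
    ∀ x y : ℤ, 1 ≤ y →
      (x ^ n - m * y ^ n = 1 ∨ x ^ n - m * y ^ n = -1) →
      |(m : ℝ) ^ ((1 : ℝ) / n) - (x : ℝ) / (y : ℝ)| < 1 / (2 * (y : ℝ) ^ 2) := by
  intro x y hy h
  have hn0 : (0:ℝ) < n := by positivity
  have hnne : (n:ℝ) ≠ 0 := ne_of_gt hn0
  have hm0 : (0:ℝ) < (m:ℝ) := by exact_mod_cast lt_of_lt_of_le (by norm_num) hm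
  set α : ℝ := (m : ℝ) ^ ((1 : ℝ) / n) with hα_def
  have hα : 0 < α := Real.rpow_pos_of_pos hm0 _
  have hαpow : ∀ k : ℕ, α ^ k = (m : ℝ) ^ ((k : ℝ) / n) := by
    intro k
    rw [hα_def, ← Real.rpow_natCast ((m:ℝ) ^ ((1:ℝ)/n)) k, ← Real.rpow_mul hm0.le]
    ring_nf
  have hαn : α ^ n = (m : ℝ) := by
    rw [hαpow n, div_self hnne, Real.rpow_one]
  have hαn1 : α ^ (n - 1) = (m : ℝ) ^ (((n:ℝ) - 1) / n) := by
    rw [hαpow (n - 1)]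
    congr 2
    push_cast [Nat.cast_sub (by omega : 1 ≤ n)]
    ring
  -- x ≥ 1
  have hyn : (1:ℤ) ≤ y ^ n := one_le_pow₀ hy
  have hx1 : (1:ℤ) ≤ x := by
    have hxn : (1:ℤ) ≤ x ^ n := by
      rcases h with h | h <;> nlinarith
    by_contra hc
    push_neg at hc
    have hx0 : x ≤ 0 := by omega
    have : x ^ n ≤ 0 := by
      rcases hodd with ⟨k, hk⟩
      subst hk
      exact Odd.pow_nonpos ⟨k, rfl⟩ hx0
    omega
  have hxR : (1:ℝ) ≤ (x:ℝ) := by exact_mod_cast hx1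
  have hyR : (1:ℝ) ≤ (y:ℝ) := by exact_mod_cast hy
  have hy0 : (0:ℝ) < (y:ℝ) := lt_of_lt_of_le one_pos hyR
  set b : ℝ := α * y with hb_def
  have hb0 : 0 < b := mul_pos hα hy0
  set S : ℝ := ∑ i ∈ Finset.range n, (x:ℝ) ^ i * b ^ (n - 1 - i) with hS_def
  have hfact : S * ((x:ℝ) - b) = (x:ℝ) ^ n - b ^ n := geom_sum₂_mul _ _ _
  have hbn : b ^ n = (m:ℝ) * (y:ℝ) ^ n := by
    rw [hb_def, mul_pow, hαn]
  -- lower bound on S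
  have hSlb : b ^ (n - 1) ≤ S := by
    have := Finset.single_le_sum (f := fun i => (x:ℝ) ^ i * b ^ (n - 1 - i))
      (fun i _ => by positivity) (Finset.mem_range.mpr (by omega : 0 < n))
    simpa using this
  have h2n : (2:ℝ) * n ≤ 2 ^ n := by
    have h1 : n - 1 < 2 ^ (n - 1) := Nat.lt_two_pow_self
    have h2 : n ≤ 2 ^ (n - 1) := by omega
    have h3 : 2 * n ≤ 2 ^ n := by
      calc 2 * n ≤ 2 * 2 ^ (n - 1) := by omega
      _ = 2 ^ n := by rw [← pow_succ']; congr 1; omega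
    exact_mod_cast h3
  have hyn1 : (y:ℝ) ≤ (y:ℝ) ^ (n - 1) := le_self_pow₀ hyR (by omega)
  have hSgt : 2 * (y:ℝ) < S := by
    have hbpow : b ^ (n - 1) = α ^ (n - 1) * (y:ℝ) ^ (n - 1) := by
      rw [hb_def, mul_pow]
    have h4 : 2 ^ n / (n:ℝ) < α ^ (n - 1) := by rw [hαn1]; exact hbig
    have h5 : (2:ℝ) ≤ 2 ^ n / (n:ℝ) := by
      rw [le_div_iff₀ hn0]; linarith
    have h6 : (2:ℝ) < α ^ (n - 1) := lt_of_le_of_lt h5 h4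
    have h7 : 2 * (y:ℝ) < α ^ (n - 1) * (y:ℝ) ^ (n - 1) := by
      have hy1pos : (0:ℝ) < (y:ℝ) ^ (n - 1) := by positivity
      nlinarith
    calc 2 * (y:ℝ) < b ^ (n - 1) := by rw [hbpow]; exact h7
    _ ≤ S := hSlb
  have hS0 : 0 < S := lt_trans (by positivity) hSgt
  -- |x - b| = 1 / S
  have habs : |(x:ℝ) - b| = 1 / S := by
    have h1 : |(x:ℝ) ^ n - b ^ n| = 1 := by
      rw [hbn]
      rcases h with h | h
      · have : ((x:ℤ) ^ n - m * y ^ n : ℤ) = 1 := h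
        have : ((x:ℝ)) ^ n - (m:ℝ) * (y:ℝ) ^ n = 1 := by exact_mod_cast this
        rw [this]; norm_num
      · have : ((x:ℝ)) ^ n - (m:ℝ) * (y:ℝ) ^ n = -1 := by exact_mod_cast h
        rw [this]; norm_num
    have h2 : |S| * |(x:ℝ) - b| = 1 := by rw [← abs_mul, hfact, h1]
    rw [abs_of_pos hS0] at h2
    rw [eq_div_iff hS0.ne']
    linear_combination h2
  -- conclude
  have hkey : α - (x:ℝ)/(y:ℝ) = -(((x:ℝ) - b) / y) := by
    rw [hb_def]; field_simp; ring
  rw [hkey, abs_neg, abs_div, abs_of_pos hy0, habs]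
  rw [div_div, div_lt_div_iff₀ (mul_pos hS0 hy0) (by positivity)]
  nlinarith [hS0, hy0, hSgt]
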